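/- arXiv:1809.07383 — 3 statements merged into one kernel-verified Lean document; each statement's English description precedes it below -/
import Mathlib

section
/- Let W be a mixing matrix as in the context and let Λ = Diag(α_1, …, α_n) with α_i > 0 for all i. Then a vector x* = (x_1*, …, x_n*) is a Nash equilibrium of Γ if and only if there exists a matrix X* ∈ Ω_a with diagonal vector diag(X*) = x* such that ⟨(I − W)X* + Λ F̃(X*), X − X*⟩_Fro ≥ 0 for all X ∈ Ω_a. -/
/-- `x` is a Nash equilibrium of the game with action sets `Ω i ⊆ ℝ` and costs `J i`. -/
def IsNashEq {n : ℕ} (Ω : Fin n → Set ℝ) (J : Fin n → (Fin n → ℝ) → ℝ) (x : Fin n → ℝ) : Prop :=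
  (∀ i, x i ∈ Ω i) ∧ ∀ i : Fin n, ∀ t ∈ Ω i, J i x ≤ J i (Function.update x i t)

/-- The diagonal matrix `F̃(X) = Diag(∂J_i/∂x_i(x_(i)))`, where `x_(i)` is the `i`-th row of `X`
and `F x i = ∂J_i/∂x_i (x)`. -/
noncomputable def Ftil {n : ℕ} (F : (Fin n → ℝ) → Fin n → ℝ)
    (X : Matrix (Fin n) (Fin n) ℝ) : Matrix (Fin n) (Fin n) ℝ :=
  Matrix.diagonal fun i => F (X i) i

/-- Frobenius inner product of two real matrices. -/
noncomputable def frob {n : ℕ} (A B : Matrix (Fin n) (Fin n) ℝ) : ℝ :=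
  ∑ i, ∑ j, A i j * B i j

open Filter Set Topology in
lemma aux_deriv_nonneg {h : ℝ → ℝ} {d : ℝ} (hd : HasDerivAt h d 0)
    (H : ∀ s ∈ Set.Ioc (0:ℝ) 1, h 0 ≤ h s) : 0 ≤ d := by
  rw [hasDerivAt_iff_tendsto_slope] at hd
  have hle : Tendsto (slope h 0) (𝓝[>] 0) (𝓝 d) :=
    hd.mono_left (nhdsWithin_mono _ (fun x hx => ne_of_gt hx))
  refine ge_of_tendsto hle ?_
  filter_upwards [Ioc_mem_nhdsGT_of_mem (by norm_num : (0:ℝ) ∈ Set.Ico (0:ℝ) 1)] with s hs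
  rw [slope_def_field]
  have h0 : (0:ℝ) < s := hs.1
  have : h 0 ≤ h s := H s hs
  have : (0:ℝ) ≤ h s - h 0 := by linarith
  have : (0:ℝ) ≤ (h s - h 0) / (s - 0) := by
    apply div_nonneg this; linarith
  simpa using this

open Filter Set Topology in
lemma aux_deriv_le {h : ℝ → ℝ} {d c : ℝ} (hd : HasDerivAt h d 0)
    (H : ∀ s ∈ Set.Ioc (0:ℝ) 1, h s - h 0 ≤ s * c) : d ≤ c := by
  rw [hasDerivAt_iff_tendsto_slope] at hd
  have hle : Tendsto (slope h 0) (𝓝[>] 0) (𝓝 d) :=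
    hd.mono_left (nhdsWithin_mono _ (fun x hx => ne_of_gt hx))
  refine le_of_tendsto hle ?_
  filter_upwards [Ioc_mem_nhdsGT_of_mem (by norm_num : (0:ℝ) ∈ Set.Ico (0:ℝ) 1)] with s hs
  rw [slope_def_field]
  have h0 : (0:ℝ) < s := hs.1
  have hH := H s hs
  rw [div_le_iff₀ (by linarith : (0:ℝ) < s - 0)]
  simpa [mul_comm] using hH

lemma aux_hasDerivAt_line {g : ℝ → ℝ} {d : ℝ} (a t : ℝ) (hg : HasDerivAt g d a) :
    HasDerivAt (fun s : ℝ => g (a + s * (t - a))) (d * (t - a)) 0 := by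
  have hl : HasDerivAt (fun s : ℝ => a + s * (t - a)) (t - a) 0 := by
    simpa using ((hasDerivAt_id (0:ℝ)).mul_const (t - a)).const_add a
  have hg' : HasDerivAt g d (a + 0 * (t - a)) := by simpa using hg
  exact hg'.comp 0 hl

/-- First-order necessary condition at a constrained minimum. -/
lemma aux_first_order {g : ℝ → ℝ} {d a t : ℝ} {S : Set ℝ}
    (hS : Convex ℝ S) (ha : a ∈ S) (ht : t ∈ S)
    (hd : HasDerivAt g d a) (hmin : ∀ u ∈ S, g a ≤ g u) : 0 ≤ d * (t - a) := by
  refine aux_deriv_nonneg (aux_hasDerivAt_line a t hd) ?_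
  intro s hs
  have hmem : a + s * (t - a) ∈ S := by
    have := hS ha ht (by linarith [hs.2] : (0:ℝ) ≤ 1 - s) (le_of_lt hs.1) (by ring)
    simpa [smul_eq_mul] using (by
      have h' : (1 - s) * a + s * t = a + s * (t - a) := by ring
      rw [← h']; exact this)
  have := hmin _ hmem
  simpa using this

/-- First-order sufficient condition under convexity. -/
lemma aux_first_order_suff {g : ℝ → ℝ} {d a t : ℝ}
    (hg : ConvexOn ℝ Set.univ g) (hd : HasDerivAt g d a) (hge : 0 ≤ d * (t - a)) :
    g a ≤ g t := by
  have key : d * (t - a) ≤ g t - g a := by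
    refine aux_deriv_le (aux_hasDerivAt_line a t hd) ?_
    intro s hs
    have hc := hg.2 (Set.mem_univ a) (Set.mem_univ t)
      (by linarith [hs.2] : (0:ℝ) ≤ 1 - s) (le_of_lt hs.1) (by ring)
    have h' : (1 - s) • a + s • t = a + s * (t - a) := by simp [smul_eq_mul]; ring
    rw [h'] at hc
    simp only [smul_eq_mul] at hc
    simp only [zero_mul, add_zero]
    nlinarith
  linarith

/-- `x*` is a Nash equilibrium iff there is an estimation matrix `X* ∈ Ω_a`
with diagonal `x*` such that `⟨(I - W)X* + Λ F̃(X*), X - X*⟩_Fro ≥ 0` for all `X ∈ Ω_a`. -/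
theorem statement4 {n : ℕ} (Ω : Fin n → Set ℝ) (J : Fin n → (Fin n → ℝ) → ℝ)
    (F : (Fin n → ℝ) → Fin n → ℝ)
    (hΩne : ∀ i, (Ω i).Nonempty) (hΩcl : ∀ i, IsClosed (Ω i)) (hΩcv : ∀ i, Convex ℝ (Ω i))
    (hconv : ∀ (i : Fin n) (x : Fin n → ℝ),
      ConvexOn ℝ (Set.univ : Set ℝ) fun t : ℝ => J i (Function.update x i t))
    (hder : ∀ (i : Fin n) (x : Fin n → ℝ),
      HasDerivAt (fun t : ℝ => J i (Function.update x i t)) (F x i) (x i))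
    (W : Matrix (Fin n) (Fin n) ℝ) (hWsym : W.IsSymm) (hWnn : ∀ i j, 0 ≤ W i j)
    (hWrow : ∀ i, ∑ j, W i j = 1) (hWcol : ∀ j, ∑ i, W i j = 1)
    (hWpsd : ((1 : Matrix (Fin n) (Fin n) ℝ) - W).PosSemidef)
    (hWnull : ∀ v : Fin n → ℝ,
      Matrix.mulVec ((1 : Matrix (Fin n) (Fin n) ℝ) - W) v = 0 ↔ ∃ c : ℝ, v = fun _ => c)
    (α : Fin n → ℝ) (hα : ∀ i, 0 < α i)
    (xs : Fin n → ℝ) :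
    IsNashEq Ω J xs ↔
      ∃ Xs : Matrix (Fin n) (Fin n) ℝ, (∀ i, Xs i i ∈ Ω i) ∧ (∀ i, Xs i i = xs i) ∧
        ∀ X : Matrix (Fin n) (Fin n) ℝ, (∀ i, X i i ∈ Ω i) →
          0 ≤ frob (((1 : Matrix (Fin n) (Fin n) ℝ) - W) * Xs + Matrix.diagonal α * Ftil F Xs)
                (X - Xs) := by
  constructor
  · -- forward: Nash equilibrium gives the variational inequality with consensus matrix
    rintro ⟨hmem, hNash⟩
    refine ⟨Matrix.of (fun _ j => xs j), fun i => hmem i, fun i => rfl, ?_⟩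
    intro X hX
    set Xs : Matrix (Fin n) (Fin n) ℝ := Matrix.of (fun _ j => xs j) with hXsdef
    have hMeq : ((1 : Matrix (Fin n) (Fin n) ℝ) - W) * Xs + Matrix.diagonal α * Ftil F Xs
        = Matrix.diagonal (fun i => α i * F xs i) := by
      have h1 : ((1 : Matrix (Fin n) (Fin n) ℝ) - W) * Xs = 0 := by
        ext i j
        rw [Matrix.mul_apply]
        have : ∀ k, (((1 : Matrix (Fin n) (Fin n) ℝ) - W) i k) * Xs k j
            = ((if i = k then (1:ℝ) else 0) - W i k) * xs j := by
          intro k; simp [Matrix.sub_apply, Matrix.one_apply, hXsdef]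
        rw [Finset.sum_congr rfl (fun k _ => this k)]
        simp [sub_mul, Finset.sum_sub_distrib, ← Finset.sum_mul, hWrow i]
      rw [h1, zero_add, Ftil, Matrix.diagonal_mul_diagonal]
      congr 1
    rw [hMeq]
    have hfrob : frob (Matrix.diagonal (fun i => α i * F xs i)) (X - Xs)
        = ∑ i, α i * F xs i * (X i i - xs i) := by
      unfold frob
      refine Finset.sum_congr rfl (fun i _ => ?_)
      rw [Finset.sum_eq_single i]
      · simp [hXsdef]
      · intro j _ hj; simp [Matrix.diagonal_apply_ne' _ hj]
      · simp
    rw [hfrob]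
    refine Finset.sum_nonneg (fun i _ => ?_)
    have hkey : 0 ≤ F xs i * (X i i - xs i) := by
      refine aux_first_order (hΩcv i) (hmem i) (hX i) (hder i xs) ?_
      intro u hu
      have := hNash i u hu
      simpa [Function.update_eq_self] using this
    have := mul_nonneg (le_of_lt (hα i)) hkey
    linarith [this, mul_assoc (α i) (F xs i) (X i i - xs i)]
  · -- backward
    rintro ⟨Xs, hdiagΩ, hdiagx, hVI⟩
    set M : Matrix (Fin n) (Fin n) ℝ :=
      ((1 : Matrix (Fin n) (Fin n) ℝ) - W) * Xs + Matrix.diagonal α * Ftil F Xs with hMdef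
    -- frob against a single-entry perturbation
    have hfrobE : ∀ (i j : Fin n) (c : ℝ),
        frob M (fun p q => if p = i ∧ q = j then c else 0) = M i j * c := by
      intro i j c
      unfold frob
      rw [Finset.sum_eq_single i]
      · rw [Finset.sum_eq_single j]
        · simp
        · intro q _ hq; simp [hq]
        · simp
      · intro p _ hp
        apply Finset.sum_eq_zero; intro q _
        simp [hp]
      · simp
    have hperturb : ∀ (i j : Fin n) (c : ℝ), (Xs i i + (if i = i ∧ i = j then c else 0) ∈ Ω i) →
        0 ≤ M i j * c := by
      intro i j c hc
      have hX : ∀ p, (Xs + Matrix.of fun p q => if p = i ∧ q = j then c else 0) p p ∈ Ω p := by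
        intro p
        by_cases hp : p = i
        · subst hp; simpa using hc
        · simpa [hp] using hdiagΩ p
      have := hVI _ hX
      have hsub : (Xs + Matrix.of fun p q => if p = i ∧ q = j then c else 0) - Xs
          = fun p q => if p = i ∧ q = j then c else 0 := by
        ext p q; simp
      rw [hsub, hfrobE] at this
      exact this
    -- off-diagonal entries of M vanish
    have hMoff : ∀ i j, i ≠ j → M i j = 0 := by
      intro i j hij
      have h1 : 0 ≤ M i j * (- M i j) := by
        apply hperturb
        simpa [hij] using hdiagΩ i
      nlinarith
    -- hence (I - W) * Xs is diagonal off the diagonal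
    have hIWoff : ∀ i j, i ≠ j → (((1 : Matrix (Fin n) (Fin n) ℝ) - W) * Xs) i j = 0 := by
      intro i j hij
      have := hMoff i j hij
      rw [hMdef] at this
      have hd : (Matrix.diagonal α * Ftil F Xs) i j = 0 := by
        rw [Ftil, Matrix.diagonal_mul_diagonal, Matrix.diagonal_apply_ne _ hij]
      simp only [Matrix.add_apply] at this
      rw [hd] at this; linarith
    -- column sums of (I - W) * Xs are zero, hence diagonal entries vanish too
    have hIWzero : ((1 : Matrix (Fin n) (Fin n) ℝ) - W) * Xs = 0 := by
      have hcolsum : ∀ j, ∑ i, (((1 : Matrix (Fin n) (Fin n) ℝ) - W) * Xs) i j = 0 := by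
        intro j
        have : ∑ i, ∑ k, (((1 : Matrix (Fin n) (Fin n) ℝ) - W) i k) * Xs k j
            = ∑ k, (∑ i, (((1 : Matrix (Fin n) (Fin n) ℝ) - W) i k)) * Xs k j := by
          rw [Finset.sum_comm]
          exact Finset.sum_congr rfl (fun k _ => (Finset.sum_mul _ _ _).symm)
        simp only [Matrix.mul_apply]
        rw [this]
        apply Finset.sum_eq_zero; intro k _
        have : ∑ i, (((1 : Matrix (Fin n) (Fin n) ℝ) - W) i k) = 0 := by
          simp [Matrix.sub_apply, Matrix.one_apply, Finset.sum_sub_distrib, hWcol k]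
        rw [this, zero_mul]
      ext i j
      by_cases hij : i = j
      · subst hij
        have := hcolsum i
        rw [Finset.sum_eq_single i] at this
        · simpa using this
        · intro p _ hp; exact hIWoff p i hp
        · simp
      · simpa using hIWoff i j hij
    -- columns of Xs are constant, so Xs p q = xs q
    have hXsval : ∀ p q, Xs p q = xs q := by
      intro p q
      have hmv : Matrix.mulVec ((1 : Matrix (Fin n) (Fin n) ℝ) - W) (fun k => Xs k q) = 0 := by
        funext i
        have : (((1 : Matrix (Fin n) (Fin n) ℝ) - W) * Xs) i q = 0 := by rw [hIWzero]; simp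
        simpa [Matrix.mulVec, Matrix.mul_apply, dotProduct] using this
      obtain ⟨c, hc⟩ := (hWnull _).mp hmv
      have h1 : Xs p q = c := congrFun hc p
      have h2 : Xs q q = c := congrFun hc q
      rw [h1, ← h2, hdiagx q]
    have hrow : ∀ i, Xs i = xs := fun i => funext (fun j => hXsval i j)
    constructor
    · intro i; rw [← hdiagx i]; exact hdiagΩ i
    · intro i t ht
      have hMii : M i i = α i * F xs i := by
        rw [hMdef]
        simp only [Matrix.add_apply]
        rw [hIWzero]
        rw [Ftil, Matrix.diagonal_mul_diagonal, Matrix.diagonal_apply_eq, hrow i]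
        simp
      have h1 : 0 ≤ M i i * (t - xs i) := by
        apply hperturb i i
        simpa [hdiagx i] using ht
      rw [hMii] at h1
      have hkey : 0 ≤ F xs i * (t - xs i) := by nlinarith [hα i]
      have := aux_first_order_suff (hconv i xs) (hder i xs) hkey
      simpa [Function.update_eq_self] using this
end

section
/- Assume the game mapping F is strongly monotone on ℝⁿ with constant μ_F > 0 and that for each i, ∂J_i/∂x_i(x_i, ·) is L_{-i}-Lipschitz in x_{-i}. Then for all X, Y ∈ Ω_a, ⟨Λ(F̃(X) − F̃(Y)), X − Y⟩_Fro ≥ −(1/2) · max_i { α_i (√(μ_F² + L_{-i}²) − μ_F) } · ‖X − Y‖²_Fro. -/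
lemma scalar_key (μ ℓ αi c : ℝ) (hμ : 0 < μ) (hαi : 0 < αi)
    (hc : αi * (Real.sqrt (μ ^ 2 + ℓ ^ 2) - μ) ≤ c)
    (d B A G : ℝ)
    (hA : |A| ≤ ℓ * B)
    (hG : μ * d ^ 2 ≤ G * d) :
    -(1 / 2 * c * (d ^ 2 + B ^ 2)) ≤ αi * ((A + G) * d) := by
  set s := Real.sqrt (μ ^ 2 + ℓ ^ 2) with hs
  have hs0 : 0 ≤ s := Real.sqrt_nonneg _
  have hs2 : s ^ 2 = μ ^ 2 + ℓ ^ 2 := Real.sq_sqrt (by positivity)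
  have hsμ : μ ≤ s := by nlinarith
  have hd2 : |d| ^ 2 = d ^ 2 := sq_abs d
  have h1 : -(ℓ * B * |d|) ≤ A * d := by
    have h2 : |A * d| ≤ ℓ * B * |d| := by
      rw [abs_mul]; exact mul_le_mul_of_nonneg_right hA (abs_nonneg d)
    linarith [neg_abs_le (A * d)]
  have step1 : 0 ≤ αi * ((A + G) * d - (μ * d ^ 2 - ℓ * B * |d|)) :=
    mul_nonneg hαi.le (by nlinarith)
  have hpos : (0:ℝ) < s + μ := by linarith
  have e : (s + μ) * ((s + μ) * d ^ 2 - 2 * (ℓ * B) * |d| + (s - μ) * B ^ 2)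
      = ((s + μ) * |d| - ℓ * B) ^ 2 := by
    linear_combination B ^ 2 * hs2 - (s + μ) ^ 2 * hd2
  have hQ : 0 ≤ (s + μ) * d ^ 2 - 2 * (ℓ * B) * |d| + (s - μ) * B ^ 2 := by
    have h3 : (s + μ) * 0 ≤ (s + μ) * ((s + μ) * d ^ 2 - 2 * (ℓ * B) * |d| + (s - μ) * B ^ 2) := by
      rw [mul_zero, e]; exact sq_nonneg _
    exact (mul_le_mul_iff_right₀ hpos).mp h3
  nlinarith [step1, mul_nonneg hαi.le hQ,
    mul_le_mul_of_nonneg_right hc (show (0:ℝ) ≤ d ^ 2 + B ^ 2 by positivity)]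

/-- if the game mapping is `μF`-strongly monotone and each partial gradient is
`L' i`-Lipschitz in the other players' variables, then for all `X, Y ∈ Ω_a`,
`⟨Λ(F̃(X) - F̃(Y)), X - Y⟩_Fro ≥ -(1/2) max_i {α i (√(μF² + L' i²) - μF)} ‖X - Y‖²_Fro`. -/
theorem statement7 {n : ℕ} (Ω : Fin n → Set ℝ) (F : (Fin n → ℝ) → Fin n → ℝ)
    (L' : Fin n → ℝ)
    (μF : ℝ) (hμF : 0 < μF)
    (hmono : ∀ u v : Fin n → ℝ,
      μF * ∑ i, (u i - v i) ^ 2 ≤ ∑ i, (F u i - F v i) * (u i - v i))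
    (hLip2 : ∀ (i : Fin n) (x y : Fin n → ℝ), x i = y i → x i ∈ Ω i →
      |F x i - F y i| ≤ L' i * Real.sqrt (∑ j ∈ Finset.univ.erase i, (x j - y j) ^ 2))
    (α : Fin n → ℝ) (hα : ∀ i, 0 < α i)
    (cmax : ℝ)
    (hcub : ∀ i, α i * (Real.sqrt (μF ^ 2 + L' i ^ 2) - μF) ≤ cmax)
    (hcmem : ∃ i, cmax = α i * (Real.sqrt (μF ^ 2 + L' i ^ 2) - μF)) :
    ∀ X Y : Matrix (Fin n) (Fin n) ℝ, (∀ i, X i i ∈ Ω i) → (∀ i, Y i i ∈ Ω i) →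
      -(1 / 2 * cmax * frob (X - Y) (X - Y)) ≤
        frob (Matrix.diagonal α * (Ftil F X - Ftil F Y)) (X - Y) := by
  intro X Y hX hY
  have hfrob : frob (Matrix.diagonal α * (Ftil F X - Ftil F Y)) (X - Y)
      = ∑ i, α i * ((F (X i) i - F (Y i) i) * (X i i - Y i i)) := by
    unfold frob Ftil
    rw [show (Matrix.diagonal fun i => F (X i) i) - (Matrix.diagonal fun i => F (Y i) i)
        = Matrix.diagonal (fun i => F (X i) i - F (Y i) i) from Matrix.diagonal_sub _ _,
      Matrix.diagonal_mul_diagonal]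
    refine Finset.sum_congr rfl fun i _ => ?_
    rw [Finset.sum_eq_single i]
    · simp [Matrix.diagonal_apply_eq, Matrix.sub_apply]; ring
    · intro b _ hb
      rw [Matrix.diagonal_apply_ne _ (Ne.symm hb), zero_mul]
    · intro h; exact absurd (Finset.mem_univ i) h
  have hfrob2 : frob (X - Y) (X - Y) = ∑ i, ∑ j, (X i j - Y i j) ^ 2 := by
    unfold frob
    refine Finset.sum_congr rfl fun i _ => Finset.sum_congr rfl fun j _ => ?_
    simp [Matrix.sub_apply, sq]
  rw [hfrob, hfrob2]
  have key : ∀ i : Fin n, -(1 / 2 * cmax * ∑ j, (X i j - Y i j) ^ 2)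
      ≤ α i * ((F (X i) i - F (Y i) i) * (X i i - Y i i)) := by
    intro i
    set w : Fin n → ℝ := Function.update (Y i) i (X i i) with hwdef
    have hwi : w i = X i i := Function.update_self _ _ _
    have hwj : ∀ j, j ≠ i → w j = Y i j := fun j hj => Function.update_of_ne hj _ _
    set d : ℝ := X i i - Y i i with hd
    set B : ℝ := Real.sqrt (∑ j ∈ Finset.univ.erase i, (X i j - Y i j) ^ 2) with hBdef
    have hBsum : (0:ℝ) ≤ ∑ j ∈ Finset.univ.erase i, (X i j - Y i j) ^ 2 :=
      Finset.sum_nonneg fun j _ => sq_nonneg _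
    have hB2 : B ^ 2 = ∑ j ∈ Finset.univ.erase i, (X i j - Y i j) ^ 2 := Real.sq_sqrt hBsum
    -- Lipschitz bound for A := F (X i) i - F w i
    have hA : |F (X i) i - F w i| ≤ L' i * B := by
      have h := hLip2 i (X i) w (by rw [hwi]) (hX i)
      have hsum : ∑ j ∈ Finset.univ.erase i, (X i j - w j) ^ 2
          = ∑ j ∈ Finset.univ.erase i, (X i j - Y i j) ^ 2 := by
        refine Finset.sum_congr rfl fun j hj => ?_
        rw [hwj j (Finset.ne_of_mem_erase hj)]
      rwa [hsum] at h
    -- monotonicity bound for G := F w i - F (Y i) i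
    have hG : μF * d ^ 2 ≤ (F w i - F (Y i) i) * d := by
      have h := hmono w (Y i)
      have l1 : ∑ j, (w j - Y i j) ^ 2 = d ^ 2 := by
        rw [Finset.sum_eq_single i]
        · rw [hwi]
        · intro b _ hb; rw [hwj b hb]; ring
        · intro h'; exact absurd (Finset.mem_univ i) h'
      have l2 : ∑ j, (F w j - F (Y i) j) * (w j - Y i j) = (F w i - F (Y i) i) * d := by
        rw [Finset.sum_eq_single i]
        · rw [hwi]
        · intro b _ hb; rw [hwj b hb]; ring
        · intro h'; exact absurd (Finset.mem_univ i) h'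
      rwa [l1, l2] at h
    have hk := scalar_key μF (L' i) (α i) cmax hμF (hα i) (hcub i) d B
      (F (X i) i - F w i) (F w i - F (Y i) i) hA hG
    have hsplit : ∑ j, (X i j - Y i j) ^ 2 = d ^ 2 + B ^ 2 := by
      rw [hB2, hd, ← Finset.add_sum_erase _ _ (Finset.mem_univ i)]
    rw [hsplit]
    calc -(1 / 2 * cmax * (d ^ 2 + B ^ 2))
        ≤ α i * ((F (X i) i - F w i + (F w i - F (Y i) i)) * d) := hk
      _ = α i * ((F (X i) i - F (Y i) i) * d) := by ring
  calc -(1 / 2 * cmax * ∑ i, ∑ j, (X i j - Y i j) ^ 2)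
      = ∑ i, -(1 / 2 * cmax * ∑ j, (X i j - Y i j) ^ 2) := by
        rw [Finset.mul_sum, ← Finset.sum_neg_distrib]
    _ ≤ ∑ i, α i * ((F (X i) i - F (Y i) i) * (X i i - Y i i)) :=
        Finset.sum_le_sum fun i _ => key i
end

section
/- Let Q ⊆ ℝ^d be a nonempty closed convex set, g : Q → ℝ^d strongly monotone with constant μ > 0 and Lipschitz continuous with constant L ≥ μ on Q, γ = L/μ, and x* ∈ Q the unique solution of VI(Q, g). Let y⁰ ∈ Q, λ⁰ = 1, S^k = Σ_{t=0}^{k} λ^t, λ^{k+1} = S^k/γ, and define recursively x^k = P_Q( (1/S^k) Σ_{t=0}^{k} λ^t ( y^t − g(y^t)/μ ) ) and y^{k+1} = P_Q( x^k − g(x^k)/L ). Set ỹ^k = (1/S^k) Σ_{t=0}^{k} λ^t y^t. If M ∈ ℝ satisfies ⟨g(y), y⁰ − y⟩ + 0.5 μ ‖y⁰ − y‖² ≤ M for all y ∈ Q, then for all k ≥ 0, 0.5 μ ‖ỹ^k − x*‖² ≤ M · γ² · exp(−k/(γ + 1)). -/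
open scoped RealInnerProductSpace

set_option maxHeartbeats 1000000

lemma proj_char13 {d : ℕ} {Q : Set (EuclideanSpace ℝ (Fin d))} (hQcv : Convex ℝ Q)
    {z p : EuclideanSpace ℝ (Fin d)} (hp : p ∈ Q) (hmin : ∀ w ∈ Q, ‖z - p‖ ≤ ‖z - w‖) :
    ∀ w ∈ Q, ⟪z - p, w - p⟫ ≤ 0 := by
  intro w hw
  by_contra hc
  push_neg at hc
  have hB : (0:ℝ) ≤ ‖w - p‖ ^ 2 := sq_nonneg _
  have key : ∀ t : ℝ, 0 < t → t ≤ 1 → 2 * ⟪z - p, w - p⟫ ≤ t * ‖w - p‖ ^ 2 := by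
    intro t ht0 ht1
    have hq : p + t • (w - p) ∈ Q := by
      have := hQcv hp hw (by linarith : (0:ℝ) ≤ 1 - t) ht0.le (by ring)
      convert this using 1
      module
    have h1 := hmin _ hq
    have h2 : ‖z - p‖ ^ 2 ≤ ‖z - (p + t • (w - p))‖ ^ 2 := by
      have := pow_le_pow_left₀ (norm_nonneg _) h1 2
      exact this
    have h3 : z - (p + t • (w - p)) = (z - p) - t • (w - p) := by abel
    rw [h3, norm_sub_sq_real (z - p) (t • (w - p)), real_inner_smul_right, norm_smul] at h2
    simp only [Real.norm_eq_abs] at h2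
    have habs : |t| = t := abs_of_pos ht0
    rw [habs] at h2
    nlinarith [sq_nonneg t]
  rcases le_or_gt (‖w - p‖ ^ 2) 0 with hB0 | hB0
  · have := key 1 one_pos le_rfl
    nlinarith
  · set A := ⟪z - p, w - p⟫ with hA
    have hmp : 0 < min 1 (A / ‖w - p‖ ^ 2) := lt_min one_pos (div_pos hc hB0)
    have ht := key _ hmp (min_le_left _ _)
    have h4 : min 1 (A / ‖w - p‖ ^ 2) * ‖w - p‖ ^ 2 ≤ (A / ‖w - p‖ ^ 2) * ‖w - p‖ ^ 2 :=
      mul_le_mul_of_nonneg_right (min_le_right _ _) hB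
    rw [div_mul_cancel₀ _ hB0.ne'] at h4
    nlinarith


/-- Theorem 3 of Nesterov–Scrimali: convergence of the accelerated gradient
scheme for a strongly monotone Lipschitz variational inequality over a nonempty closed convex
set `Q ⊆ ℝ^d`, with `γ = L/μ`. Here `P` is the nearest-point projection onto `Q` and `M`
bounds the merit function at `y⁰`. -/
theorem statement13 {d : ℕ} (Q : Set (EuclideanSpace ℝ (Fin d)))
    (hQne : Q.Nonempty) (hQcl : IsClosed Q) (hQcv : Convex ℝ Q)
    (g : EuclideanSpace ℝ (Fin d) → EuclideanSpace ℝ (Fin d))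
    (μ L : ℝ) (hμ : 0 < μ) (hμL : μ ≤ L)
    (hmono : ∀ u ∈ Q, ∀ v ∈ Q, μ * ‖u - v‖ ^ 2 ≤ ⟪g u - g v, u - v⟫)
    (hlip : ∀ u ∈ Q, ∀ v ∈ Q, ‖g u - g v‖ ≤ L * ‖u - v‖)
    (P : EuclideanSpace ℝ (Fin d) → EuclideanSpace ℝ (Fin d))
    (hP : ∀ z, P z ∈ Q ∧ ∀ y ∈ Q, ‖z - P z‖ ≤ ‖z - y‖)
    (xs : EuclideanSpace ℝ (Fin d)) (hxsQ : xs ∈ Q)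
    (hxsVI : ∀ x ∈ Q, 0 ≤ ⟪g xs, x - xs⟫)
    (lam S : ℕ → ℝ) (x y : ℕ → EuclideanSpace ℝ (Fin d))
    (hlam0 : lam 0 = 1)
    (hS : ∀ k : ℕ, S k = ∑ t ∈ Finset.range (k + 1), lam t)
    (hlam : ∀ k : ℕ, lam (k + 1) = S k / (L / μ))
    (hy0 : y 0 ∈ Q)
    (hx : ∀ k : ℕ,
      x k = P ((S k)⁻¹ • ∑ t ∈ Finset.range (k + 1), lam t • (y t - μ⁻¹ • g (y t))))
    (hy : ∀ k : ℕ, y (k + 1) = P (x k - L⁻¹ • g (x k)))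
    (M : ℝ) (hM : ∀ z ∈ Q, ⟪g z, y 0 - z⟫ + 0.5 * μ * ‖y 0 - z‖ ^ 2 ≤ M) :
    ∀ k : ℕ,
      0.5 * μ * ‖(S k)⁻¹ • (∑ t ∈ Finset.range (k + 1), lam t • y t) - xs‖ ^ 2 ≤
        M * (L / μ) ^ 2 * Real.exp (-(k : ℝ) / (L / μ + 1)) := by
  set γ := L / μ with hγdef
  have hL : 0 < L := lt_of_lt_of_le hμ hμL
  have hγ1 : (1:ℝ) ≤ γ := (one_le_div hμ).2 hμL
  have hγ0 : (0:ℝ) < γ := lt_of_lt_of_le one_pos hγ1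
  have hproj : ∀ z, ∀ w ∈ Q, ⟪z - P z, w - P z⟫ ≤ 0 :=
    fun z => proj_char13 hQcv (hP z).1 (hP z).2
  -- S and lam facts
  have hS0 : S 0 = 1 := by rw [hS]; simp [hlam0]
  have hSrec : ∀ k, S (k + 1) = S k * (1 + γ⁻¹) := by
    intro k
    rw [hS (k + 1), Finset.sum_range_succ, ← hS k, hlam k]
    field_simp
  have hSpow : ∀ k, S k = (1 + γ⁻¹) ^ k := by
    intro k
    induction k with
    | zero => simpa using hS0
    | succ n ih => rw [hSrec, ih, pow_succ]
  have hS1 : ∀ k, (1:ℝ) ≤ S k := by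
    intro k
    rw [hSpow]
    have h1 : (1:ℝ) ≤ 1 + γ⁻¹ := by nlinarith [inv_pos.2 hγ0]
    exact one_le_pow₀ h1
  have hSpos : ∀ k, (0:ℝ) < S k := fun k => lt_of_lt_of_le one_pos (hS1 k)
  have hlampos : ∀ t, (0:ℝ) < lam t := by
    intro t
    cases t with
    | zero => rw [hlam0]; exact one_pos
    | succ n => rw [hlam n]; exact div_pos (hSpos n) hγ0
  have hyQ : ∀ t, y t ∈ Q := by
    intro t
    cases t with
    | zero => exact hy0
    | succ n => rw [hy n]; exact (hP _).1
  have hxQ : ∀ k, x k ∈ Q := by intro k; rw [hx k]; exact (hP _).1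
  -- the estimating functions
  set c : ℕ → EuclideanSpace ℝ (Fin d) :=
    fun k => (S k)⁻¹ • ∑ t ∈ Finset.range (k + 1), lam t • (y t - μ⁻¹ • g (y t)) with hcdef
  set ψ : ℕ → EuclideanSpace ℝ (Fin d) → ℝ :=
    fun k w => ∑ t ∈ Finset.range (k + 1),
      lam t * (⟪g (y t), w - y t⟫ + μ / 2 * ‖w - y t‖ ^ 2) with hψdef
  have hxc : ∀ k, x k = P (c k) := fun k => hx k
  -- strong minimality of x k for ψ k
  have hψmin : ∀ k, ∀ w ∈ Q, ψ k (x k) + μ * S k / 2 * ‖w - x k‖ ^ 2 ≤ ψ k w := by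
    intro k w hw
    have hps : ⟪c k - x k, w - x k⟫ ≤ 0 := by
      have := hproj (c k) w hw
      rwa [← hxc k] at this
    have perterm : ∀ t ∈ Finset.range (k + 1),
        lam t * (⟪g (y t), w - y t⟫ + μ / 2 * ‖w - y t‖ ^ 2)
          - lam t * (⟪g (y t), x k - y t⟫ + μ / 2 * ‖x k - y t‖ ^ 2)
        = ⟪lam t • (g (y t) + μ • (x k - y t)), w - x k⟫
          + lam t * (μ / 2) * ‖w - x k‖ ^ 2 := by
      intro t _
      have h1 : w - y t = (w - x k) + (x k - y t) := by abel
      have h2 : ⟪g (y t), w - y t⟫ = ⟪g (y t), w - x k⟫ + ⟪g (y t), x k - y t⟫ := by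
        rw [h1, inner_add_right]
      have h3 : ‖w - y t‖ ^ 2
          = ‖w - x k‖ ^ 2 + 2 * ⟪w - x k, x k - y t⟫ + ‖x k - y t‖ ^ 2 := by
        rw [h1, norm_add_sq_real]
      rw [real_inner_smul_left, inner_add_left, real_inner_smul_left, h2, h3,
        real_inner_comm (x k - y t) (w - x k)]
      ring
    have hsum_eq : ψ k w - ψ k (x k)
        = ⟪∑ t ∈ Finset.range (k + 1), lam t • (g (y t) + μ • (x k - y t)), w - x k⟫
          + μ * S k / 2 * ‖w - x k‖ ^ 2 := by
      rw [hψdef]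
      simp only
      rw [← Finset.sum_sub_distrib, Finset.sum_congr rfl perterm,
        Finset.sum_add_distrib, sum_inner]
      congr 1
      rw [← Finset.sum_mul, ← Finset.sum_mul, ← hS k]
      ring
    have hvec : ∑ t ∈ Finset.range (k + 1), lam t • (g (y t) + μ • (x k - y t))
        = (μ * S k) • (x k - c k) := by
      have e1 : (S k) • c k
          = ∑ t ∈ Finset.range (k + 1), lam t • (y t - μ⁻¹ • g (y t)) := by
        rw [hcdef]
        simp only
        rw [smul_inv_smul₀ (hSpos k).ne']
      have e3 : (μ * S k) • x k = ∑ t ∈ Finset.range (k + 1), (μ * lam t) • x k := by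
        rw [hS k, Finset.mul_sum, Finset.sum_smul]
      rw [smul_sub, mul_smul μ (S k) (c k), e1, Finset.smul_sum, e3,
        ← Finset.sum_sub_distrib]
      apply Finset.sum_congr rfl
      intro t _
      have e4 : μ • (lam t • (y t - μ⁻¹ • g (y t))) = lam t • (μ • y t - g (y t)) := by
        rw [smul_comm, smul_sub, smul_inv_smul₀ hμ.ne']
      rw [e4]
      module
    rw [hvec, real_inner_smul_left] at hsum_eq
    have hinner : 0 ≤ ⟪x k - c k, w - x k⟫ := by
      have : x k - c k = -(c k - x k) := by abel
      rw [this, inner_neg_left]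
      linarith
    have hμS : 0 ≤ μ * S k := (mul_pos hμ (hSpos k)).le
    nlinarith [mul_nonneg hμS hinner]
  -- extragradient step inequality
  have hstep : ∀ k, ∀ w ∈ Q,
      0 ≤ L / 2 * ‖w - x k‖ ^ 2 + ⟪g (y (k + 1)), w - y (k + 1)⟫ := by
    intro k w hw
    set p := y (k + 1) with hpdef
    have h1 : ⟪(x k - L⁻¹ • g (x k)) - p, w - p⟫ ≤ 0 := by
      rw [hpdef, hy k]
      exact hproj _ w hw
    have h2 : ‖g p - g (x k)‖ ≤ L * ‖p - x k‖ := hlip _ (hyQ _) _ (hxQ _)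
    have hBrev : ‖p - x k‖ = ‖x k - p‖ := norm_sub_rev _ _
    have h3 : -(‖g p - g (x k)‖ * ‖w - p‖) ≤ ⟪g p - g (x k), w - p⟫ :=
      neg_le_of_neg_le (by
        have := abs_real_inner_le_norm (g p - g (x k)) (w - p)
        have := neg_abs_le (⟪g p - g (x k), w - p⟫)
        linarith)
    have e : ⟪(x k - L⁻¹ • g (x k)) - p, w - p⟫
        = ⟪x k - p, w - p⟫ - L⁻¹ * ⟪g (x k), w - p⟫ := by
      rw [sub_right_comm, inner_sub_left, real_inner_smul_left]
    rw [e] at h1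
    have hL1 : L * ⟪x k - p, w - p⟫ ≤ ⟪g (x k), w - p⟫ := by
      have h2' := mul_le_mul_of_nonneg_left h1 hL.le
      rw [mul_sub, ← mul_assoc, mul_inv_cancel₀ hL.ne', one_mul, mul_zero] at h2'
      linarith
    have hip : ⟪x k - p, w - p⟫ = ⟪x k - p, w - x k⟫ + ‖x k - p‖ ^ 2 := by
      rw [show w - p = (w - x k) + (x k - p) from by abel, inner_add_right,
        real_inner_self_eq_norm_sq]
    rw [hip] at hL1
    have hC2 : ‖w - p‖ ^ 2
        = ‖w - x k‖ ^ 2 + 2 * ⟪w - x k, x k - p⟫ + ‖x k - p‖ ^ 2 := by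
      rw [show w - p = (w - x k) + (x k - p) from by abel, norm_add_sq_real]
    have hsym : ⟪w - x k, x k - p⟫ = ⟪x k - p, w - x k⟫ := real_inner_comm _ _
    have key : (0:ℝ) ≤ ‖x k - p‖ ^ 2 + ⟪x k - p, w - x k⟫ + 1 / 2 * ‖w - x k‖ ^ 2
        - ‖x k - p‖ * ‖w - p‖ := by
      nlinarith [sq_nonneg (‖x k - p‖ - ‖w - p‖), hC2, hsym]
    have key2 := mul_nonneg hL.le key
    rw [hBrev] at h2
    have hBC : ‖g p - g (x k)‖ * ‖w - p‖ ≤ L * ‖x k - p‖ * ‖w - p‖ :=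
      mul_le_mul_of_nonneg_right h2 (norm_nonneg _)
    have hsplit : ⟪g p, w - p⟫ = ⟪g p - g (x k), w - p⟫ + ⟪g (x k), w - p⟫ := by
      rw [inner_sub_left]; ring
    rw [hsplit]
    linarith [key2, hL1, h3, hBC]
  -- lower bound on merit at y0-type terms
  have hgap : ∀ w ∈ Q, -(M * γ ^ 2) ≤ ⟪g (y 0), w - y 0⟫ + μ / 2 * ‖w - y 0‖ ^ 2 := by
    intro w hw
    have hMxs := hM xs hxsQ
    have hVIy0 := hxsVI (y 0) (hyQ 0)
    have hVIw := hxsVI w hw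
    have hlip0 : ‖g (y 0) - g xs‖ ≤ L * ‖y 0 - xs‖ := hlip _ (hyQ 0) _ hxsQ
    have hw' : w - y 0 = (w - xs) + (xs - y 0) := by abel
    have hsplit : ⟪g (y 0), w - y 0⟫
        = ⟪g (y 0) - g xs, w - y 0⟫ + ⟪g xs, w - xs⟫ + ⟪g xs, xs - y 0⟫ := by
      have e1 : ⟪g (y 0) - g xs, w - y 0⟫ = ⟪g (y 0), w - y 0⟫ - ⟪g xs, w - y 0⟫ :=
        inner_sub_left _ _ _
      have e2 : ⟪g xs, w - y 0⟫ = ⟪g xs, w - xs⟫ + ⟪g xs, xs - y 0⟫ := by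
        rw [hw', inner_add_right]
      linarith
    have hxs0 : ⟪g xs, xs - y 0⟫ = -⟪g xs, y 0 - xs⟫ := by
      rw [show xs - y 0 = -(y 0 - xs) from by abel, inner_neg_right]
    have h3 : -(‖g (y 0) - g xs‖ * ‖w - y 0‖) ≤ ⟪g (y 0) - g xs, w - y 0⟫ := by
      have := abs_real_inner_le_norm (g (y 0) - g xs) (w - y 0)
      have := neg_abs_le (⟪g (y 0) - g xs, w - y 0⟫)
      linarith
    have hBC : ‖g (y 0) - g xs‖ * ‖w - y 0‖ ≤ L * ‖y 0 - xs‖ * ‖w - y 0‖ :=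
      mul_le_mul_of_nonneg_right hlip0 (norm_nonneg _)
    have hrev : ‖y 0 - xs‖ = ‖xs - y 0‖ := norm_sub_rev _ _
    have hLγ : L = γ * μ := by rw [hγdef]; field_simp
    set ρ := ‖y 0 - xs‖ with hρ
    set r := ‖w - y 0‖ with hr
    set I := (⟪g xs, y 0 - xs⟫ : ℝ) with hI
    -- hMxs : I + 0.5 * μ * ρ ^ 2 ≤ M
    rw [hsplit, hxs0]
    have hγsq : (1:ℝ) ≤ γ ^ 2 := one_le_pow₀ hγ1
    have key : L * ρ * r + I ≤ M * γ ^ 2 + μ / 2 * r ^ 2 := by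
      rw [hLγ]
      nlinarith [mul_nonneg (sub_nonneg.2 hγsq) (sub_nonneg.2 hMxs),
        mul_nonneg (sub_nonneg.2 hγsq) hVIy0, sq_nonneg (γ * ρ - r), hμ.le,
        mul_nonneg hμ.le (sq_nonneg (γ * ρ - r))]
    linarith [h3, hBC, hVIw]
  -- main induction
  have hΨlb : ∀ k, -(M * γ ^ 2) ≤ ψ k (x k) := by
    intro k
    induction k with
    | zero =>
      have h := hgap (x 0) (hxQ 0)
      rw [hψdef]
      simpa [hlam0] using h
    | succ k ih =>
      have hsplitψ : ψ (k + 1) (x (k + 1)) = ψ k (x (k + 1))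
          + lam (k + 1) * (⟪g (y (k + 1)), x (k + 1) - y (k + 1)⟫
            + μ / 2 * ‖x (k + 1) - y (k + 1)‖ ^ 2) := by
        rw [hψdef]
        simp only
        rw [Finset.sum_range_succ]
      have hmin := hψmin k (x (k + 1)) (hxQ (k + 1))
      have hst := hstep k (x (k + 1)) (hxQ (k + 1))
      have hlamk : lam (k + 1) * L = μ * S k := by
        rw [hlam k, hγdef]
        field_simp
      have hlp := (hlampos (k + 1)).le
      have h5 : 0 ≤ lam (k + 1) * (L / 2 * ‖x (k + 1) - x k‖ ^ 2
          + ⟪g (y (k + 1)), x (k + 1) - y (k + 1)⟫) := mul_nonneg hlp hst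
      have h6 : 0 ≤ lam (k + 1) * (μ / 2 * ‖x (k + 1) - y (k + 1)‖ ^ 2) :=
        mul_nonneg hlp (by positivity)
      have e7 : lam (k + 1) * (L / 2 * ‖x (k + 1) - x k‖ ^ 2)
          = μ * S k / 2 * ‖x (k + 1) - x k‖ ^ 2 := by
        rw [show lam (k + 1) * (L / 2 * ‖x (k + 1) - x k‖ ^ 2)
            = lam (k + 1) * L * ‖x (k + 1) - x k‖ ^ 2 / 2 from by ring, hlamk]
        ring
      rw [hsplitψ]
      nlinarith [hmin, ih, h5, h6, e7]
  -- conclusion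
  intro k
  set Y := ∑ t ∈ Finset.range (k + 1), lam t • y t with hYdef
  have hSkne : S k ≠ 0 := (hSpos k).ne'
  -- the averaged point lies in Q
  have hyt : (S k)⁻¹ • Y = ∑ t ∈ Finset.range (k + 1), ((S k)⁻¹ * lam t) • y t := by
    rw [hYdef, Finset.smul_sum]
    exact Finset.sum_congr rfl fun t _ => (smul_smul _ _ _)
  have hQmem : (S k)⁻¹ • Y ∈ Q := by
    rw [hyt]
    exact hQcv.sum_mem
      (fun i _ => mul_nonneg (inv_nonneg.2 (hSpos k).le) (hlampos i).le)
      (by rw [← Finset.mul_sum, ← hS k]; exact inv_mul_cancel₀ hSkne)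
      (fun i _ => hyQ i)
  -- monotonicity bound on ψ k xs
  have hterm : ∀ t ∈ Finset.range (k + 1),
      lam t * (⟪g (y t), xs - y t⟫ + μ / 2 * ‖xs - y t‖ ^ 2)
        ≤ lam t * (⟪g xs, xs - y t⟫ - μ / 2 * ‖xs - y t‖ ^ 2) := by
    intro t _
    have hm := hmono (y t) (hyQ t) xs hxsQ
    have e1 : ⟪g (y t) - g xs, y t - xs⟫ = ⟪g (y t), y t - xs⟫ - ⟪g xs, y t - xs⟫ :=
      inner_sub_left _ _ _
    have e2 : ⟪g (y t), xs - y t⟫ = -⟪g (y t), y t - xs⟫ := by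
      rw [show xs - y t = -(y t - xs) from by abel, inner_neg_right]
    have e3 : ⟪g xs, xs - y t⟫ = -⟪g xs, y t - xs⟫ := by
      rw [show xs - y t = -(y t - xs) from by abel, inner_neg_right]
    have e4 : ‖xs - y t‖ = ‖y t - xs‖ := norm_sub_rev _ _
    refine mul_le_mul_of_nonneg_left ?_ (hlampos t).le
    rw [e2, e3, e4]
    linarith [hm, e1.le, e1.ge]
  have hsum1 : ψ k xs
      ≤ ∑ t ∈ Finset.range (k + 1), lam t * (⟪g xs, xs - y t⟫ - μ / 2 * ‖xs - y t‖ ^ 2) := by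
    rw [hψdef]
    exact Finset.sum_le_sum hterm
  have hsum_split : ∑ t ∈ Finset.range (k + 1),
        lam t * (⟪g xs, xs - y t⟫ - μ / 2 * ‖xs - y t‖ ^ 2)
      = (∑ t ∈ Finset.range (k + 1), lam t * ⟪g xs, xs - y t⟫)
        - μ / 2 * (∑ t ∈ Finset.range (k + 1), lam t * ‖y t - xs‖ ^ 2) := by
    rw [Finset.mul_sum, ← Finset.sum_sub_distrib]
    exact Finset.sum_congr rfl fun t _ => by rw [norm_sub_rev xs (y t)]; ring
  have hinner_sum : ∑ t ∈ Finset.range (k + 1), lam t * ⟪g xs, xs - y t⟫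
      = S k * ⟪g xs, xs - (S k)⁻¹ • Y⟫ := by
    have e7 : ∑ t ∈ Finset.range (k + 1), lam t * ⟪g xs, xs - y t⟫
        = ⟪g xs, ∑ t ∈ Finset.range (k + 1), lam t • (xs - y t)⟫ := by
      rw [inner_sum]
      exact Finset.sum_congr rfl fun t _ => (real_inner_smul_right _ _ _).symm
    have e8 : ∑ t ∈ Finset.range (k + 1), lam t • (xs - y t)
        = S k • (xs - (S k)⁻¹ • Y) := by
      have e9 : ∑ t ∈ Finset.range (k + 1), lam t • (xs - y t)
          = (∑ t ∈ Finset.range (k + 1), lam t) • xs - Y := by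
        rw [hYdef, Finset.sum_smul, ← Finset.sum_sub_distrib]
        exact Finset.sum_congr rfl fun t _ => smul_sub _ _ _
      rw [e9, ← hS k, smul_sub, smul_inv_smul₀ hSkne]
    rw [e7, e8, real_inner_smul_right]
  have hVIty : 0 ≤ ⟪g xs, (S k)⁻¹ • Y - xs⟫ := hxsVI _ hQmem
  have hflip : ⟪g xs, xs - (S k)⁻¹ • Y⟫ = -⟪g xs, (S k)⁻¹ • Y - xs⟫ := by
    rw [show xs - (S k)⁻¹ • Y = -((S k)⁻¹ • Y - xs) from by abel, inner_neg_right]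
  -- Jensen
  have hJ1 : ‖(S k)⁻¹ • Y - xs‖
      ≤ (S k)⁻¹ * ∑ t ∈ Finset.range (k + 1), lam t * ‖y t - xs‖ := by
    have e10 : ∑ t ∈ Finset.range (k + 1), lam t • (y t - xs) = Y - S k • xs := by
      rw [hYdef, hS k, Finset.sum_smul, ← Finset.sum_sub_distrib]
      exact Finset.sum_congr rfl fun t _ => smul_sub _ _ _
    have e11 : (S k)⁻¹ • Y - xs
        = (S k)⁻¹ • ∑ t ∈ Finset.range (k + 1), lam t • (y t - xs) := by
      rw [e10, smul_sub, inv_smul_smul₀ hSkne]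
    rw [e11, norm_smul]
    simp only [Real.norm_eq_abs, abs_of_pos (inv_pos.2 (hSpos k))]
    refine mul_le_mul_of_nonneg_left ?_ (inv_nonneg.2 (hSpos k).le)
    refine (norm_sum_le _ _).trans (le_of_eq ?_)
    refine Finset.sum_congr rfl fun t _ => ?_
    rw [norm_smul, Real.norm_eq_abs, abs_of_pos (hlampos t)]
  have hCS : (∑ t ∈ Finset.range (k + 1), lam t * ‖y t - xs‖) ^ 2
      ≤ S k * ∑ t ∈ Finset.range (k + 1), lam t * ‖y t - xs‖ ^ 2 := by
    have h := Finset.sum_mul_sq_le_sq_mul_sq (Finset.range (k + 1))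
      (fun t => Real.sqrt (lam t)) (fun t => Real.sqrt (lam t) * ‖y t - xs‖)
    have e12 : ∀ t ∈ Finset.range (k + 1),
        Real.sqrt (lam t) * (Real.sqrt (lam t) * ‖y t - xs‖) = lam t * ‖y t - xs‖ := by
      intro t _
      rw [← mul_assoc, Real.mul_self_sqrt (hlampos t).le]
    have e13 : ∀ t ∈ Finset.range (k + 1), Real.sqrt (lam t) ^ 2 = lam t := by
      intro t _
      exact Real.sq_sqrt (hlampos t).le
    have e14 : ∀ t ∈ Finset.range (k + 1),
        (Real.sqrt (lam t) * ‖y t - xs‖) ^ 2 = lam t * ‖y t - xs‖ ^ 2 := by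
      intro t _
      rw [mul_pow, Real.sq_sqrt (hlampos t).le]
    rw [Finset.sum_congr rfl e12, Finset.sum_congr rfl e13, Finset.sum_congr rfl e14,
      ← hS k] at h
    exact h
  have hJ : S k * ‖(S k)⁻¹ • Y - xs‖ ^ 2
      ≤ ∑ t ∈ Finset.range (k + 1), lam t * ‖y t - xs‖ ^ 2 := by
    have h1 : ‖(S k)⁻¹ • Y - xs‖ ^ 2
        ≤ ((S k)⁻¹ * ∑ t ∈ Finset.range (k + 1), lam t * ‖y t - xs‖) ^ 2 :=
      pow_le_pow_left₀ (norm_nonneg _) hJ1 2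
    have h2 : S k * ((S k)⁻¹ * ∑ t ∈ Finset.range (k + 1), lam t * ‖y t - xs‖) ^ 2
        = (∑ t ∈ Finset.range (k + 1), lam t * ‖y t - xs‖) ^ 2 / S k := by
      field_simp
    have h3 : (∑ t ∈ Finset.range (k + 1), lam t * ‖y t - xs‖) ^ 2 / S k
        ≤ ∑ t ∈ Finset.range (k + 1), lam t * ‖y t - xs‖ ^ 2 := by
      rw [div_le_iff₀ (hSpos k)]
      nlinarith [hCS]
    nlinarith [mul_le_mul_of_nonneg_left h1 (hSpos k).le]
  -- put everything together
  have hM0 : 0 ≤ M := by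
    have := hM (y 0) hy0
    simpa using this
  have c2 : ψ k (x k) ≤ ψ k xs := by
    have h := hψmin k xs hxsQ
    have hnn : 0 ≤ μ * S k / 2 * ‖xs - x k‖ ^ 2 :=
      mul_nonneg (div_nonneg (mul_pos hμ (hSpos k)).le (by norm_num)) (sq_nonneg _)
    linarith
  have c3 : ψ k xs ≤ -(μ / 2 * (S k * ‖(S k)⁻¹ • Y - xs‖ ^ 2)) := by
    have h1 : S k * ⟪g xs, xs - (S k)⁻¹ • Y⟫ ≤ 0 := by
      rw [hflip]
      exact mul_nonpos_of_nonneg_of_nonpos (hSpos k).le (by linarith)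
    have h2 : μ / 2 * (S k * ‖(S k)⁻¹ • Y - xs‖ ^ 2)
        ≤ μ / 2 * ∑ t ∈ Finset.range (k + 1), lam t * ‖y t - xs‖ ^ 2 :=
      mul_le_mul_of_nonneg_left hJ (by positivity)
    calc ψ k xs ≤ _ := hsum1
      _ = _ := hsum_split
      _ ≤ -(μ / 2 * (S k * ‖(S k)⁻¹ • Y - xs‖ ^ 2)) := by
          rw [hinner_sum]
          linarith
  have main : μ / 2 * (S k * ‖(S k)⁻¹ • Y - xs‖ ^ 2) ≤ M * γ ^ 2 := by
    have c1 := hΨlb k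
    linarith
  have final : 0.5 * μ * ‖(S k)⁻¹ • Y - xs‖ ^ 2 ≤ M * γ ^ 2 * (S k)⁻¹ := by
    have h := mul_le_mul_of_nonneg_right main (inv_nonneg.2 (hSpos k).le)
    have e : μ / 2 * (S k * ‖(S k)⁻¹ • Y - xs‖ ^ 2) * (S k)⁻¹
        = 0.5 * μ * ‖(S k)⁻¹ • Y - xs‖ ^ 2 := by
      field_simp
      ring
    linarith [e ▸ h]
  have hexp : (S k)⁻¹ ≤ Real.exp (-(k : ℝ) / (γ + 1)) := by
    have hγ1pos : (0:ℝ) < γ + 1 := by linarith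
    have hbase : (1 + γ⁻¹)⁻¹ ≤ Real.exp (-(1 / (γ + 1))) := by
      have h := Real.add_one_le_exp (-(1 / (γ + 1)))
      have e : (1 + γ⁻¹)⁻¹ = 1 - 1 / (γ + 1) := by
        field_simp
        ring
      linarith
    have hpow : ((1 + γ⁻¹)⁻¹) ^ k ≤ (Real.exp (-(1 / (γ + 1)))) ^ k :=
      pow_le_pow_left₀ (inv_nonneg.2 (by positivity)) hbase k
    have e15 : (Real.exp (-(1 / (γ + 1)))) ^ k = Real.exp (-(k : ℝ) / (γ + 1)) := by
      rw [← Real.exp_nat_mul]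
      congr 1
      ring
    rw [hSpow k, ← inv_pow]
    rw [e15] at hpow
    exact hpow
  have hMγ : 0 ≤ M * γ ^ 2 := mul_nonneg hM0 (sq_nonneg γ)
  calc 0.5 * μ * ‖(S k)⁻¹ • Y - xs‖ ^ 2 ≤ M * γ ^ 2 * (S k)⁻¹ := final
    _ ≤ M * γ ^ 2 * Real.exp (-(k : ℝ) / (γ + 1)) :=
        mul_le_mul_of_nonneg_left hexp hMγ
end
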